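/- Let A, B be N×M real matrices with ‖A - B‖ ≤ ω d, singular values of A and B bounded below by Σ_min > 0, and let A⁺, B⁺ denote Moore–Penrose pseudoinverses. Then ‖A⁺ - B⁺‖ ≤ √2 · ‖A⁺‖ · ‖B⁺‖ · ‖A - B‖ ≤ √2 ω d / Σ_min². -/

import Mathlib

open Matrix

/-- Operator 2-norm of a real matrix, via the induced Euclidean linear map. -/
noncomputable def opNorm {m n : ℕ} (A : Matrix (Fin m) (Fin n) ℝ) : ℝ :=
  ‖LinearMap.toContinuousLinearMap (Matrix.toEuclideanLin A)‖

/-- Moore–Penrose pseudoinverse of a full-column-rank matrix: `A⁺ = (AᵀA)⁻¹Aᵀ`. -/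
noncomputable def pinv {m n : ℕ} (A : Matrix (Fin m) (Fin n) ℝ) :
    Matrix (Fin n) (Fin m) ℝ :=
  (Aᵀ * A)⁻¹ * Aᵀ

open scoped Matrix.Norms.L2Operator InnerProductSpace

lemma opNorm_eq_l2 {m n : ℕ} (A : Matrix (Fin m) (Fin n) ℝ) : opNorm A = ‖A‖ := rfl

lemma teu_apply_le {m n : ℕ} (A : Matrix (Fin m) (Fin n) ℝ) (x : EuclideanSpace ℝ (Fin n)) :
    ‖Matrix.toEuclideanLin A x‖ ≤ ‖A‖ * ‖x‖ := by
  exact (LinearMap.toContinuousLinearMap (Matrix.toEuclideanLin A)).le_opNorm x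

lemma opNorm_le_bound' {m n : ℕ} (M : Matrix (Fin m) (Fin n) ℝ) {c : ℝ} (hc : 0 ≤ c)
    (h : ∀ x : EuclideanSpace ℝ (Fin n), ‖Matrix.toEuclideanLin M x‖ ≤ c * ‖x‖) : ‖M‖ ≤ c := by
  rw [Matrix.l2_opNorm_def]
  exact ContinuousLinearMap.opNorm_le_bound _ hc (by simpa using h)

lemma teu_mul {m n k : ℕ} (A : Matrix (Fin m) (Fin n) ℝ) (B : Matrix (Fin n) (Fin k) ℝ)
    (x : EuclideanSpace ℝ (Fin k)) :
    Matrix.toEuclideanLin (A * B) x = Matrix.toEuclideanLin A (Matrix.toEuclideanLin B x) := by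
  simp [Matrix.toEuclideanLin_apply, Matrix.mulVec_mulVec]

lemma teu_one {m : ℕ} (x : EuclideanSpace ℝ (Fin m)) :
    Matrix.toEuclideanLin (1 : Matrix (Fin m) (Fin m) ℝ) x = x := by
  simp [Matrix.toEuclideanLin_apply, Matrix.one_mulVec]

lemma teu_inner {m n : ℕ} (A : Matrix (Fin m) (Fin n) ℝ) (u : EuclideanSpace ℝ (Fin m))
    (v : EuclideanSpace ℝ (Fin n)) :
    ⟪Matrix.toEuclideanLin Aᵀ u, v⟫_ℝ = ⟪u, Matrix.toEuclideanLin A v⟫_ℝ := by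
  rw [show Aᵀ = Aᴴ by simp, Matrix.toEuclideanLin_conjTranspose_eq_adjoint]
  exact LinearMap.adjoint_inner_left _ _ _

lemma norm_transpose {m n : ℕ} (A : Matrix (Fin m) (Fin n) ℝ) : ‖Aᵀ‖ = ‖A‖ := by
  rw [show Aᵀ = Aᴴ by simp]
  exact Matrix.l2_opNorm_conjTranspose A

lemma det_unit {m n : ℕ} (A : Matrix (Fin m) (Fin n) ℝ) {Smin : ℝ} (hS : 0 < Smin)
    (hA : ∀ v : EuclideanSpace ℝ (Fin n), Smin * ‖v‖ ≤ ‖Matrix.toEuclideanLin A v‖) :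
    IsUnit (Aᵀ * A).det := by
  have hpd : (Aᵀ * A).PosDef := by
    rw [show Aᵀ = Aᴴ by simp]
    refine Matrix.PosDef.of_dotProduct_mulVec_pos (Matrix.isHermitian_conjTranspose_mul_self A) fun x hx => ?_
    have hAx : A *ᵥ x ≠ 0 := by
      intro h0
      have hx' : Matrix.toEuclideanLin A ((WithLp.equiv 2 (Fin n → ℝ)).symm x) = 0 := by
        rw [Matrix.toEuclideanLin_apply]
        simp [h0]
      have := hA ((WithLp.equiv 2 (Fin n → ℝ)).symm x)
      rw [hx'] at this
      simp only [norm_zero] at this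
      have hxnorm : 0 < ‖(WithLp.equiv 2 (Fin n → ℝ)).symm x‖ := by
        simp only [norm_pos_iff]
        intro h
        exact hx (by simpa using congrArg (WithLp.equiv 2 (Fin n → ℝ)) h)
      nlinarith
    rw [← Matrix.mulVec_mulVec, Matrix.dotProduct_mulVec, Matrix.vecMul_conjTranspose, star_star]
    have h1 : 0 ≤ star (A *ᵥ x) ⬝ᵥ (A *ᵥ x) := by
      simp only [star_trivial]
      exact Finset.sum_nonneg fun i _ => mul_self_nonneg _
    have h2 : star (A *ᵥ x) ⬝ᵥ (A *ᵥ x) ≠ 0 := by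
      simp only [star_trivial]
      rw [ne_eq, dotProduct_self_eq_zero]
      exact hAx
    exact lt_of_le_of_ne h1 (Ne.symm h2)
  exact isUnit_iff_ne_zero.mpr (ne_of_gt hpd.det_pos)

lemma pinv_mul {m n : ℕ} (A : Matrix (Fin m) (Fin n) ℝ) (h : IsUnit (Aᵀ * A).det) :
    pinv A * A = 1 := by
  rw [pinv, Matrix.mul_assoc]
  exact Matrix.nonsing_inv_mul _ h

lemma inv_symm {m n : ℕ} (A : Matrix (Fin m) (Fin n) ℝ) : ((Aᵀ * A)⁻¹)ᵀ = (Aᵀ * A)⁻¹ := by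
  rw [Matrix.transpose_nonsing_inv, Matrix.transpose_mul, Matrix.transpose_transpose]

lemma proj_symm {m n : ℕ} (A : Matrix (Fin m) (Fin n) ℝ) : (A * pinv A)ᵀ = A * pinv A := by
  rw [pinv, Matrix.transpose_mul, Matrix.transpose_mul, inv_symm, Matrix.transpose_transpose,
    Matrix.mul_assoc]

lemma pinv_proj {m n : ℕ} (A : Matrix (Fin m) (Fin n) ℝ) (h : IsUnit (Aᵀ * A).det) :
    pinv A * (A * pinv A) = pinv A := by
  rw [← Matrix.mul_assoc, pinv_mul A h, Matrix.one_mul]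

lemma proj_idem {m n : ℕ} (A : Matrix (Fin m) (Fin n) ℝ) (h : IsUnit (Aᵀ * A).det) :
    (A * pinv A) * (A * pinv A) = A * pinv A := by
  rw [Matrix.mul_assoc, pinv_proj A h]

/-- Pythagoras for the orthogonal projection `A A⁺`. -/
lemma pyth {m n : ℕ} (A : Matrix (Fin m) (Fin n) ℝ) (h : IsUnit (Aᵀ * A).det)
    (x : EuclideanSpace ℝ (Fin m)) :
    ‖Matrix.toEuclideanLin (A * pinv A) x‖ ^ 2
      + ‖x - Matrix.toEuclideanLin (A * pinv A) x‖ ^ 2 = ‖x‖ ^ 2 := by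
  set u := Matrix.toEuclideanLin (A * pinv A) x with hu
  have horth : ⟪u, x - u⟫_ℝ = 0 := by
    have h1 : ⟪u, u⟫_ℝ = ⟪x, u⟫_ℝ := by
      calc ⟪u, u⟫_ℝ = ⟪Matrix.toEuclideanLin (A * pinv A)ᵀ x, u⟫_ℝ := by rw [proj_symm]
        _ = ⟪x, Matrix.toEuclideanLin (A * pinv A) u⟫_ℝ := teu_inner _ _ _
        _ = ⟪x, u⟫_ℝ := by rw [hu, ← teu_mul, proj_idem A h]
    rw [inner_sub_right, h1, real_inner_comm]
    ring
  have hxdecomp : x = u + (x - u) := by abel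
  have hns := norm_add_sq_real u (x - u)
  rw [horth] at hns
  calc ‖u‖ ^ 2 + ‖x - u‖ ^ 2 = ‖u + (x - u)‖ ^ 2 := by rw [hns]; ring
    _ = ‖x‖ ^ 2 := by rw [← hxdecomp]

lemma proj_norm_le {m n : ℕ} (A : Matrix (Fin m) (Fin n) ℝ) (h : IsUnit (Aᵀ * A).det)
    (x : EuclideanSpace ℝ (Fin m)) :
    ‖Matrix.toEuclideanLin (A * pinv A) x‖ ≤ ‖x‖ := by
  have := pyth A h x
  nlinarith [norm_nonneg (Matrix.toEuclideanLin (A * pinv A) x), norm_nonneg x,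
    sq_nonneg ‖x - Matrix.toEuclideanLin (A * pinv A) x‖]

lemma pinv_norm_le {m n : ℕ} (A : Matrix (Fin m) (Fin n) ℝ) {Smin : ℝ} (hS : 0 < Smin)
    (hA : ∀ v : EuclideanSpace ℝ (Fin n), Smin * ‖v‖ ≤ ‖Matrix.toEuclideanLin A v‖) :
    ‖pinv A‖ ≤ 1 / Smin := by
  have h := det_unit A hS hA
  apply opNorm_le_bound' _ (by positivity)
  intro x
  have h1 : Smin * ‖Matrix.toEuclideanLin (pinv A) x‖
      ≤ ‖Matrix.toEuclideanLin (A * pinv A) x‖ := by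
    rw [teu_mul]; exact hA _
  have h2 := proj_norm_le A h x
  rw [div_mul_eq_mul_div, le_div_iff₀ hS]
  nlinarith

set_option maxHeartbeats 1000000 in
/-- The key perturbation estimate, assuming `‖pinv B‖ ≤ ‖pinv A‖`. -/
lemma core {m n : ℕ} (A B : Matrix (Fin m) (Fin n) ℝ) {Smin : ℝ} (hS : 0 < Smin)
    (hA : ∀ v : EuclideanSpace ℝ (Fin n), Smin * ‖v‖ ≤ ‖Matrix.toEuclideanLin A v‖)
    (hB : ∀ v : EuclideanSpace ℝ (Fin n), Smin * ‖v‖ ≤ ‖Matrix.toEuclideanLin B v‖)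
    (hle : ‖pinv B‖ ≤ ‖pinv A‖) :
    ‖pinv B - pinv A‖ ≤ Real.sqrt 2 * ‖pinv A‖ * ‖pinv B‖ * ‖A - B‖ := by
  have hAu := det_unit A hS hA
  have hBu := det_unit B hS hB
  set P := pinv A with hPdef
  set Q := pinv B with hQdef
  have hQB : Q * B = 1 := pinv_mul B hBu
  have hAt : Aᵀ * (1 - A * P) = 0 := by
    have hthis : Aᵀ * (A * P) = Aᵀ := by
      rw [hPdef, pinv, ← Matrix.mul_assoc, ← Matrix.mul_assoc,
        Matrix.mul_assoc Aᵀ A (Aᵀ * A)⁻¹]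
      rw [show Aᵀ * (A * (Aᵀ * A)⁻¹) = (Aᵀ * A) * (Aᵀ * A)⁻¹ from by rw [Matrix.mul_assoc]]
      rw [Matrix.mul_nonsing_inv _ hAu, Matrix.one_mul]
    rw [Matrix.mul_sub, Matrix.mul_one, hthis, sub_self]
  have hQQ : Q * Qᵀ = (Bᵀ * B)⁻¹ := by
    rw [hQdef, pinv, Matrix.transpose_mul, inv_symm, Matrix.transpose_transpose,
      Matrix.mul_assoc ((Bᵀ * B)⁻¹) Bᵀ (B * (Bᵀ * B)⁻¹),
      ← Matrix.mul_assoc Bᵀ B ((Bᵀ * B)⁻¹), Matrix.mul_nonsing_inv _ hBu, Matrix.mul_one]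
  have hQQB : (Q * Qᵀ) * Bᵀ = Q := by rw [hQQ, hQdef, pinv]
  have e1 : Q * (A - B) * P = Q * A * P - P := by
    rw [Matrix.mul_sub, Matrix.sub_mul, hQB, Matrix.one_mul]
  have e2 : (Q * Qᵀ) * ((B - A)ᵀ * (1 - A * P)) = Q - Q * A * P := by
    rw [Matrix.transpose_sub, Matrix.sub_mul, hAt, sub_zero, ← Matrix.mul_assoc, hQQB,
      Matrix.mul_sub, Matrix.mul_one, ← Matrix.mul_assoc]
  have hKey : Q - P = Q * (A - B) * P + (Q * Qᵀ) * ((B - A)ᵀ * (1 - A * P)) := by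
    rw [e1, e2]; abel
  apply opNorm_le_bound' _ (by positivity)
  intro x
  set u := Matrix.toEuclideanLin (A * P) x with hu
  have hpyth := pyth A hAu x
  have hxu : Matrix.toEuclideanLin (1 - A * P) x = x - u := by
    rw [map_sub, LinearMap.sub_apply, teu_one, hu]
  -- first term
  have hPx : ‖Matrix.toEuclideanLin P x‖ ≤ ‖P‖ * ‖u‖ := by
    have hrw : Matrix.toEuclideanLin P x = Matrix.toEuclideanLin P u := by
      rw [hu, ← teu_mul, pinv_proj A hAu]
    rw [hrw]; exact teu_apply_le _ _
  have ht1 : ‖Matrix.toEuclideanLin (Q * (A - B) * P) x‖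
      ≤ ‖Q‖ * (‖A - B‖ * (‖P‖ * ‖u‖)) := by
    rw [teu_mul, teu_mul]
    calc ‖Matrix.toEuclideanLin Q (Matrix.toEuclideanLin (A - B) (Matrix.toEuclideanLin P x))‖
        ≤ ‖Q‖ * ‖Matrix.toEuclideanLin (A - B) (Matrix.toEuclideanLin P x)‖ := teu_apply_le _ _
      _ ≤ ‖Q‖ * (‖A - B‖ * (‖P‖ * ‖u‖)) := by
          refine mul_le_mul_of_nonneg_left ?_ (norm_nonneg _)
          calc ‖Matrix.toEuclideanLin (A - B) (Matrix.toEuclideanLin P x)‖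
              ≤ ‖A - B‖ * ‖Matrix.toEuclideanLin P x‖ := teu_apply_le _ _
            _ ≤ ‖A - B‖ * (‖P‖ * ‖u‖) := mul_le_mul_of_nonneg_left hPx (norm_nonneg _)
  -- second term
  have ht2 : ‖Matrix.toEuclideanLin ((Q * Qᵀ) * ((B - A)ᵀ * (1 - A * P))) x‖
      ≤ ‖Q‖ * (‖Q‖ * (‖A - B‖ * ‖x - u‖)) := by
    rw [Matrix.mul_assoc Q Qᵀ ((B - A)ᵀ * (1 - A * P)), teu_mul, teu_mul, teu_mul, hxu]
    have s1 : ‖Matrix.toEuclideanLin ((B - A)ᵀ) (x - u)‖ ≤ ‖A - B‖ * ‖x - u‖ := by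
      have hh := teu_apply_le ((B - A)ᵀ) (x - u)
      rwa [norm_transpose, norm_sub_rev] at hh
    have s2 : ‖Matrix.toEuclideanLin Qᵀ (Matrix.toEuclideanLin ((B - A)ᵀ) (x - u))‖
        ≤ ‖Q‖ * (‖A - B‖ * ‖x - u‖) := by
      have h0 := teu_apply_le Qᵀ (Matrix.toEuclideanLin ((B - A)ᵀ) (x - u))
      rw [norm_transpose] at h0
      calc ‖Matrix.toEuclideanLin Qᵀ (Matrix.toEuclideanLin ((B - A)ᵀ) (x - u))‖
          ≤ ‖Q‖ * ‖Matrix.toEuclideanLin ((B - A)ᵀ) (x - u)‖ := h0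
        _ ≤ ‖Q‖ * (‖A - B‖ * ‖x - u‖) := mul_le_mul_of_nonneg_left s1 (norm_nonneg _)
    calc ‖Matrix.toEuclideanLin Q
          (Matrix.toEuclideanLin Qᵀ (Matrix.toEuclideanLin ((B - A)ᵀ) (x - u)))‖
        ≤ ‖Q‖ * ‖Matrix.toEuclideanLin Qᵀ (Matrix.toEuclideanLin ((B - A)ᵀ) (x - u))‖ :=
          teu_apply_le _ _
      _ ≤ ‖Q‖ * (‖Q‖ * (‖A - B‖ * ‖x - u‖)) := mul_le_mul_of_nonneg_left s2 (norm_nonneg _)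
  -- combine
  have hsplit : ‖Matrix.toEuclideanLin (Q - P) x‖
      ≤ ‖Q‖ * (‖A - B‖ * (‖P‖ * ‖u‖)) + ‖Q‖ * (‖Q‖ * (‖A - B‖ * ‖x - u‖)) := by
    have hrw : Matrix.toEuclideanLin (Q - P) x
        = Matrix.toEuclideanLin (Q * (A - B) * P) x
          + Matrix.toEuclideanLin ((Q * Qᵀ) * ((B - A)ᵀ * (1 - A * P))) x := by
      rw [hKey, map_add, LinearMap.add_apply]
    rw [hrw]
    exact le_trans (norm_add_le _ _) (add_le_add ht1 ht2)
  -- Cauchy-Schwarz + Pythagoras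
  have hcs : ‖P‖ * ‖u‖ + ‖Q‖ * ‖x - u‖ ≤ Real.sqrt 2 * ‖P‖ * ‖x‖ := by
    have hP0 : (0:ℝ) ≤ ‖P‖ := norm_nonneg _
    have hQ0 : (0:ℝ) ≤ ‖Q‖ := norm_nonneg _
    have hu0 : (0:ℝ) ≤ ‖u‖ := norm_nonneg _
    have hw0 : (0:ℝ) ≤ ‖x - u‖ := norm_nonneg _
    have hx0 : (0:ℝ) ≤ ‖x‖ := norm_nonneg _
    have hsq : (‖P‖ * ‖u‖ + ‖Q‖ * ‖x - u‖) ^ 2 ≤ (Real.sqrt 2 * ‖P‖ * ‖x‖) ^ 2 := by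
      have h2 : (Real.sqrt 2) ^ 2 = 2 := Real.sq_sqrt (by norm_num)
      have hexp : (Real.sqrt 2 * ‖P‖ * ‖x‖) ^ 2 = 2 * ‖P‖ ^ 2 * ‖x‖ ^ 2 := by
        rw [mul_pow, mul_pow, h2]
      rw [hexp, ← hpyth]
      nlinarith [sq_nonneg (‖P‖ * ‖x - u‖ - ‖Q‖ * ‖u‖), sq_nonneg (‖P‖ * ‖u‖ - ‖Q‖ * ‖x - u‖),
        mul_nonneg hP0 hu0, mul_nonneg hQ0 hw0, sq_nonneg (‖P‖ - ‖Q‖),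
        mul_le_mul_of_nonneg_right hle hw0]
    have hrhs0 : (0:ℝ) ≤ Real.sqrt 2 * ‖P‖ * ‖x‖ := by positivity
    nlinarith [add_nonneg (mul_nonneg hP0 hu0) (mul_nonneg hQ0 hw0)]
  calc ‖Matrix.toEuclideanLin (Q - P) x‖
      ≤ ‖Q‖ * (‖A - B‖ * (‖P‖ * ‖u‖)) + ‖Q‖ * (‖Q‖ * (‖A - B‖ * ‖x - u‖)) := hsplit
    _ = ‖Q‖ * ‖A - B‖ * (‖P‖ * ‖u‖ + ‖Q‖ * ‖x - u‖) := by ring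
    _ ≤ ‖Q‖ * ‖A - B‖ * (Real.sqrt 2 * ‖P‖ * ‖x‖) := by
        have hnn : (0:ℝ) ≤ ‖Q‖ * ‖A - B‖ := by positivity
        exact mul_le_mul_of_nonneg_left hcs hnn
    _ = Real.sqrt 2 * ‖P‖ * ‖Q‖ * ‖A - B‖ * ‖x‖ := by ring

/-- Wedin's perturbation bound: if `‖A - B‖ ≤ ω d` and the singular values of `A`
and `B` are bounded below by `Smin > 0` (Σ_min), then
`‖A⁺ - B⁺‖ ≤ √2 ‖A⁺‖ ‖B⁺‖ ‖A - B‖ ≤ √2 ω d / Smin²`. -/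
theorem stmt_14 {m n : ℕ} (A B : Matrix (Fin m) (Fin n) ℝ)
    (ω d Smin : ℝ) (hω : 0 < ω) (hd : 0 ≤ d) (hSmin : 0 < Smin)
    (hAB : opNorm (A - B) ≤ ω * d)
    (hA : ∀ v : EuclideanSpace ℝ (Fin n), Smin * ‖v‖ ≤ ‖Matrix.toEuclideanLin A v‖)
    (hB : ∀ v : EuclideanSpace ℝ (Fin n), Smin * ‖v‖ ≤ ‖Matrix.toEuclideanLin B v‖) :
    opNorm (pinv A - pinv B) ≤ Real.sqrt 2 * opNorm (pinv A) * opNorm (pinv B) * opNorm (A - B) ∧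
      Real.sqrt 2 * opNorm (pinv A) * opNorm (pinv B) * opNorm (A - B) ≤
        Real.sqrt 2 * ω * d / Smin ^ 2 := by
  simp only [opNorm_eq_l2] at hAB ⊢
  constructor
  · rcases le_total ‖pinv B‖ ‖pinv A‖ with h | h
    · have hc := core A B hSmin hA hB h
      rwa [norm_sub_rev (pinv A)]
    · have hc := core B A hSmin hB hA h
      calc ‖pinv A - pinv B‖ ≤ Real.sqrt 2 * ‖pinv B‖ * ‖pinv A‖ * ‖B - A‖ := hc
        _ = Real.sqrt 2 * ‖pinv A‖ * ‖pinv B‖ * ‖A - B‖ := by rw [norm_sub_rev]; ring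
  · have hPn := pinv_norm_le A hSmin hA
    have hQn := pinv_norm_le B hSmin hB
    have hP0 : (0:ℝ) ≤ ‖pinv A‖ := norm_nonneg _
    have hQ0 : (0:ℝ) ≤ ‖pinv B‖ := norm_nonneg _
    have hE0 : (0:ℝ) ≤ ‖A - B‖ := norm_nonneg _
    have hstep : Real.sqrt 2 * ‖pinv A‖ * ‖pinv B‖ * ‖A - B‖
        ≤ Real.sqrt 2 * (1 / Smin) * (1 / Smin) * (ω * d) := by
      have t1 : Real.sqrt 2 * ‖pinv A‖ * ‖pinv B‖ ≤ Real.sqrt 2 * (1 / Smin) * (1 / Smin) := by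
        have := Real.sqrt_nonneg 2
        have hs' : (0:ℝ) ≤ 1 / Smin := by positivity
        apply mul_le_mul _ hQn hQ0 (by positivity)
        exact mul_le_mul_of_nonneg_left hPn this
      apply mul_le_mul t1 hAB hE0 (by positivity)
    calc Real.sqrt 2 * ‖pinv A‖ * ‖pinv B‖ * ‖A - B‖
        ≤ Real.sqrt 2 * (1 / Smin) * (1 / Smin) * (ω * d) := hstep
      _ = Real.sqrt 2 * ω * d / Smin ^ 2 := by field_simp
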